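/- Suppose each |m_i| ≤ b_i almost surely for deterministic constants b_i < ∞. Then the almost-sure limit Z of the martingale Z_n = E_Q exp(Σ_{j=1}^n m_j ξ_j − m_j²/2) satisfies P(Z = 0) ∈ {0, 1}. -/

import Mathlib

open MeasureTheory ProbabilityTheory Filter

private lemma aux_meas {Ξ Ω : Type*} [MeasurableSpace Ω]
    (Q : MeasureTheory.Measure Ω) [MeasureTheory.SFinite Q]
    (ξ : ℕ → Ξ → ℝ) (m : ℕ → Ω → ℝ) (hm : ∀ j, Measurable (m j)) (k n : ℕ)
    (M : MeasurableSpace Ξ) (hXi : ∀ j, k ≤ j → Measurable[M] (ξ j)) :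
    Measurable[M] fun ω =>
      ∫ q, Real.exp (∑ j ∈ Finset.Ico k n, (m j q * ξ j ω - (m j q) ^ 2 / 2)) ∂Q := by
  have hGm : Measurable fun y : ℕ → ℝ =>
      ∫ q, Real.exp (∑ j ∈ Finset.Ico k n, (m j q * y j - (m j q) ^ 2 / 2)) ∂Q := by
    have hsm : MeasureTheory.StronglyMeasurable fun p : (ℕ → ℝ) × Ω =>
        Real.exp (∑ j ∈ Finset.Ico k n, (m j p.2 * p.1 j - (m j p.2) ^ 2 / 2)) := by
      apply Measurable.stronglyMeasurable
      apply Measurable.exp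
      exact Finset.measurable_sum _ fun j _ =>
        (((hm j).comp measurable_snd).mul ((measurable_pi_apply j).comp measurable_fst)).sub
          ((((hm j).comp measurable_snd).pow_const 2).div_const 2)
    exact hsm.integral_prod_right'.measurable
  have hX : Measurable[M] fun ω (j : ℕ) => if k ≤ j then ξ j ω else 0 := by
    refine measurable_pi_lambda _ fun j => ?_
    by_cases hj : k ≤ j
    · simpa [hj] using hXi j hj
    · simpa [hj] using (measurable_const : Measurable[M] fun _ : Ξ => (0 : ℝ))
  have hcomp : (fun ω =>
        ∫ q, Real.exp (∑ j ∈ Finset.Ico k n, (m j q * ξ j ω - (m j q) ^ 2 / 2)) ∂Q)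
      = (fun y : ℕ → ℝ =>
          ∫ q, Real.exp (∑ j ∈ Finset.Ico k n, (m j q * y j - (m j q) ^ 2 / 2)) ∂Q)
        ∘ (fun ω (j : ℕ) => if k ≤ j then ξ j ω else 0) := by
    funext ω
    simp only [Function.comp]
    congr 1
    funext q
    congr 1
    refine Finset.sum_congr rfl fun j hj => ?_
    rw [if_pos (Finset.mem_Ico.1 hj).1]
  rw [hcomp]
  exact hGm.comp hX

/-- Zero–one law for the partition function: if each `|m_i| ≤ b_i` a.s. for
deterministic constants `b_i`, then the a.s. limit `Z` of the martingale
`Z_n = E_Q exp (∑_{j<n} (m_j ξ_j - m_j²/2))` satisfies `P(Z = 0) ∈ {0, 1}`. -/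
theorem partition_function_zero_one_law
    {Ξ : Type*} [MeasurableSpace Ξ] (P : Measure Ξ) [IsProbabilityMeasure P]
    {Ω : Type*} [MeasurableSpace Ω] (Q : Measure Ω) [IsProbabilityMeasure Q]
    (ξ : ℕ → Ξ → ℝ) (hξmeas : ∀ j, Measurable (ξ j))
    (hindep : iIndepFun ξ P)
    (hgauss : ∀ j, P.map (ξ j) = gaussianReal 0 1)
    (m : ℕ → Ω → ℝ) (hm : ∀ j, Measurable (m j))
    (b : ℕ → ℝ) (hb : ∀ᵐ q ∂Q, ∀ i, |m i q| ≤ b i)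
    (Z : ℕ → Ξ → ℝ)
    (hZ : ∀ n ω, Z n ω =
      ∫ q, Real.exp (∑ j ∈ Finset.range n, (m j q * ξ j ω - (m j q) ^ 2 / 2)) ∂Q)
    (Zlim : Ξ → ℝ) (hZlimmeas : Measurable Zlim)
    (hconv : ∀ᵐ ω ∂P, Tendsto (fun n => Z n ω) atTop (nhds (Zlim ω))) :
    P {ω | Zlim ω = 0} = 0 ∨ P {ω | Zlim ω = 0} = 1 := by
  classical
  set C : ℕ → Ξ → ℝ := fun k ω => ∑ j ∈ Finset.range k, (b j * |ξ j ω| + (b j) ^ 2 / 2) with hC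
  set W : ℕ → ℕ → Ξ → ℝ := fun k n ω =>
    ∫ q, Real.exp (∑ j ∈ Finset.Ico k n, (m j q * ξ j ω - (m j q) ^ 2 / 2)) ∂Q with hWdef
  have hmeasS : ∀ (s : Finset ℕ) (ω : Ξ),
      Measurable fun q => Real.exp (∑ j ∈ s, (m j q * ξ j ω - (m j q) ^ 2 / 2)) := by
    intro s ω
    exact (Finset.measurable_sum s fun j _ =>
      ((hm j).mul_const _).sub (((hm j).pow_const 2).div_const 2)).exp
  have hbound : ∀ (s : Finset ℕ) (ω : Ξ), ∀ᵐ q ∂Q,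
      |∑ j ∈ s, (m j q * ξ j ω - (m j q) ^ 2 / 2)|
        ≤ ∑ j ∈ s, (b j * |ξ j ω| + (b j) ^ 2 / 2) := by
    intro s ω
    filter_upwards [hb] with q hq
    refine (Finset.abs_sum_le_sum_abs _ _).trans (Finset.sum_le_sum fun j _ => ?_)
    have h1 : |m j q| ≤ b j := hq j
    have h2 : (m j q) ^ 2 ≤ (b j) ^ 2 := by
      rw [← sq_abs (m j q)]
      exact pow_le_pow_left₀ (abs_nonneg _) h1 2
    calc |m j q * ξ j ω - (m j q) ^ 2 / 2|
        ≤ |m j q * ξ j ω| + |(m j q) ^ 2 / 2| := abs_sub _ _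
      _ ≤ b j * |ξ j ω| + (b j) ^ 2 / 2 := by
          rw [abs_mul, abs_of_nonneg (by positivity : (0:ℝ) ≤ (m j q) ^ 2 / 2)]
          exact add_le_add (mul_le_mul_of_nonneg_right h1 (abs_nonneg _)) (by linarith)
  have hint : ∀ (s : Finset ℕ) (ω : Ξ),
      Integrable (fun q => Real.exp (∑ j ∈ s, (m j q * ξ j ω - (m j q) ^ 2 / 2))) Q := by
    intro s ω
    refine Integrable.mono'
      (integrable_const (Real.exp (∑ j ∈ s, (b j * |ξ j ω| + (b j) ^ 2 / 2))))
      (hmeasS s ω).aestronglyMeasurable ?_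
    filter_upwards [hbound s ω] with q hq
    rw [Real.norm_eq_abs, abs_of_pos (Real.exp_pos _)]
    exact Real.exp_le_exp.2 ((le_abs_self _).trans hq)
  have hWnonneg : ∀ k n ω, 0 ≤ W k n ω := fun k n ω =>
    integral_nonneg fun q => (Real.exp_pos _).le
  have hZeqW : ∀ n ω, Z n ω = W 0 n ω := by
    intro n ω
    rw [hZ, Finset.range_eq_Ico]
  have hsplit : ∀ (k n : ℕ), k ≤ n → ∀ (q : Ω) (ω : Ξ),
      (∑ j ∈ Finset.range n, (m j q * ξ j ω - (m j q) ^ 2 / 2))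
        = (∑ j ∈ Finset.range k, (m j q * ξ j ω - (m j q) ^ 2 / 2))
          + ∑ j ∈ Finset.Ico k n, (m j q * ξ j ω - (m j q) ^ 2 / 2) := by
    intro k n hkn q ω
    rw [Finset.range_eq_Ico, Finset.range_eq_Ico, Finset.sum_Ico_consecutive _ (Nat.zero_le k) hkn]
  have key1 : ∀ k n ω, k ≤ n → Z n ω ≤ Real.exp (C k ω) * W k n ω := by
    intro k n ω hkn
    rw [hZ, hWdef]
    simp only
    rw [← integral_const_mul]
    refine integral_mono_ae ?_ ((hint (Finset.Ico k n) ω).const_mul _) ?_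
    · have := hint (Finset.range n) ω
      simpa using this
    · filter_upwards [hbound (Finset.range k) ω] with q hq
      rw [hsplit k n hkn q ω, Real.exp_add]
      have : Real.exp (∑ j ∈ Finset.range k, (m j q * ξ j ω - (m j q) ^ 2 / 2))
          ≤ Real.exp (C k ω) := Real.exp_le_exp.2 ((le_abs_self _).trans hq)
      exact mul_le_mul_of_nonneg_right this (Real.exp_pos _).le
  have key2 : ∀ k n ω, k ≤ n → W k n ω ≤ Real.exp (C k ω) * Z n ω := by
    intro k n ω hkn
    rw [hZ, hWdef]
    simp only
    rw [← integral_const_mul]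
    refine integral_mono_ae (hint (Finset.Ico k n) ω)
      (((hint (Finset.range n) ω).const_mul _)) ?_
    filter_upwards [hbound (Finset.range k) ω] with q hq
    rw [hsplit k n hkn q ω, Real.exp_add, ← mul_assoc]
    have h1 : (1:ℝ) ≤ Real.exp (C k ω)
        * Real.exp (∑ j ∈ Finset.range k, (m j q * ξ j ω - (m j q) ^ 2 / 2)) := by
      rw [← Real.exp_add]
      have h2 := (abs_le.1 hq).1
      refine Real.one_le_exp ?_
      simp only [hC]
      linarith
    calc Real.exp (∑ j ∈ Finset.Ico k n, (m j q * ξ j ω - (m j q) ^ 2 / 2))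
        = 1 * Real.exp (∑ j ∈ Finset.Ico k n, (m j q * ξ j ω - (m j q) ^ 2 / 2)) := by ring
      _ ≤ (Real.exp (C k ω)
            * Real.exp (∑ j ∈ Finset.range k, (m j q * ξ j ω - (m j q) ^ 2 / 2)))
          * Real.exp (∑ j ∈ Finset.Ico k n, (m j q * ξ j ω - (m j q) ^ 2 / 2)) :=
          mul_le_mul_of_nonneg_right h1 (Real.exp_pos _).le
  have hZnonneg : ∀ n ω, 0 ≤ Z n ω := fun n ω => by
    rw [hZeqW]; exact hWnonneg 0 n ω
  have hTiff : ∀ k ω, Tendsto (fun n => Z n ω) atTop (nhds 0)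
      ↔ Tendsto (fun n => W k n ω) atTop (nhds 0) := by
    intro k ω
    constructor
    · intro h
      have h' : Tendsto (fun n => Real.exp (C k ω) * Z n ω) atTop (nhds 0) := by
        simpa using h.const_mul (Real.exp (C k ω))
      exact tendsto_of_tendsto_of_tendsto_of_le_of_le' tendsto_const_nhds h'
        (Eventually.of_forall fun n => hWnonneg k n ω)
        (eventually_atTop.2 ⟨k, fun n hn => key2 k n ω hn⟩)
    · intro h
      have h' : Tendsto (fun n => Real.exp (C k ω) * W k n ω) atTop (nhds 0) := by
        simpa using h.const_mul (Real.exp (C k ω))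
      exact tendsto_of_tendsto_of_tendsto_of_le_of_le' tendsto_const_nhds h'
        (Eventually.of_forall fun n => hZnonneg n ω)
        (eventually_atTop.2 ⟨k, fun n hn => key1 k n ω hn⟩)
  set T : Set Ξ := {ω | Tendsto (fun n => Z n ω) atTop (nhds 0)} with hT
  have hPeq : P {ω | Zlim ω = 0} = P T := by
    refine measure_congr (Filter.eventuallyEq_set.2 ?_)
    filter_upwards [hconv] with ω hω
    constructor
    · intro h0
      rw [h0] at hω
      exact hω
    · intro hωT
      exact tendsto_nhds_unique hω hωT
  rw [hPeq]
  have h_le : ∀ j, MeasurableSpace.comap (ξ j) inferInstance ≤ ‹MeasurableSpace Ξ› :=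
    fun j => (hξmeas j).comap_le
  refine measure_zero_or_one_of_measurableSet_limsup_atTop h_le hindep ?_
  rw [limsup_eq_iInf_iSup_of_nat]
  rw [MeasurableSpace.measurableSet_iInf]
  intro k
  have hTk : T = {ω | Tendsto (fun n => W k n ω) atTop (nhds 0)} :=
    Set.ext fun ω => hTiff k ω
  rw [hTk]
  set Mk : MeasurableSpace Ξ :=
    ⨆ j, ⨆ (_ : k ≤ j), MeasurableSpace.comap (ξ j) inferInstance with hMk
  have hXi : ∀ j, k ≤ j → Measurable[Mk] (ξ j) := by
    intro j hj
    refine measurable_iff_comap_le.2 ?_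
    exact le_iSup₂ (f := fun j (_ : k ≤ j) => MeasurableSpace.comap (ξ j) inferInstance) j hj
  have hWk : ∀ n, Measurable[Mk] (W k n) := by
    intro n
    rw [hWdef]
    exact aux_meas Q ξ m hm k n Mk hXi
  exact measurableSet_tendsto (nhds 0) hWk
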